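/- A set G ⊆ L_≻ is a ≻-Gröbner basis of L if and only if G is a generating set of L and for each pair u, v ∈ G there exists a ≻-reduction path between x^(u,v) and y^(u,v) in G(F_{L, z^(u,v)}, G), where z^(u,v) := max{u⁺, v⁺} component-wise, x^(u,v) := z^(u,v) − u, and y^(u,v) := z^(u,v) − v. -/

import Mathlib

open scoped Classical

noncomputable section

variable {ι : Type*} [Fintype ι]

/-- `x ∈ ℕ^n`, i.e. all coordinates nonnegative. -/
def Nonneg (x : ι → ℤ) : Prop := ∀ i, 0 ≤ x i

/-- componentwise positive part `u⁺`. -/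
def vposPart (x : ι → ℤ) : ι → ℤ := fun i => max (x i) 0

/-- componentwise negative part `u⁻`. -/
def vnegPart (x : ι → ℤ) : ι → ℤ := fun i => max (-x i) 0

/-- support of a vector. -/
def suppV (x : ι → ℤ) : Set ι := {i | x i ≠ 0}

/-- membership in the fiber `F_{L,b} = {x ∈ ℕ^n : x ≡ b (mod L)}`. -/
def inFiber (L : AddSubgroup (ι → ℤ)) (b x : ι → ℤ) : Prop :=
  Nonneg x ∧ x - b ∈ L

/-- adjacency in the fiber graph: `x` and `y` differ by an element of `±S`. -/
def adjS (S : Set (ι → ℤ)) (x y : ι → ℤ) : Prop := x - y ∈ S ∨ y - x ∈ S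

/-- `p 0, p 1, …, p k` is a path in the fiber graph `G(F_{L,b}, S)`. -/
def IsPathIn (L : AddSubgroup (ι → ℤ)) (S : Set (ι → ℤ)) (b : ι → ℤ)
    (k : ℕ) (p : ℕ → ι → ℤ) : Prop :=
  (∀ i ≤ k, inFiber L b (p i)) ∧ ∀ i < k, adjS S (p i) (p (i+1))

/-- `x` and `y` are connected in the fiber graph `G(F_{L,b}, S)`. -/
def ConnIn (L : AddSubgroup (ι → ℤ)) (S : Set (ι → ℤ)) (b x y : ι → ℤ) : Prop :=
  ∃ k p, IsPathIn L S b k p ∧ p 0 = x ∧ p k = y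

/-- `S` is a generating set of the lattice `L`: all fiber graphs are connected. -/
def IsGenSet (L : AddSubgroup (ι → ℤ)) (S : Set (ι → ℤ)) : Prop :=
  ∀ b x y, inFiber L b x → inFiber L b y → ConnIn L S b x y

/-- `succ` (written `≻`) is a term ordering for `L`: an additive total
well-ordering on every fiber. -/
structure IsTermOrder (L : AddSubgroup (ι → ℤ))
    (succ : (ι → ℤ) → (ι → ℤ) → Prop) : Prop where
  trans : ∀ {x y z}, succ x y → succ y z → succ x z
  irrefl : ∀ x, ¬ succ x x
  total : ∀ b x y, inFiber L b x → inFiber L b y → x ≠ y → succ x y ∨ succ y x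
  additive : ∀ x y γ, Nonneg γ → succ x y → succ (x + γ) (y + γ)
  wf : ∀ b, WellFounded (fun x y : ι → ℤ => inFiber L b x ∧ inFiber L b y ∧ succ y x)

/-- `L_≻ = {u ∈ L : u⁺ ≻ u⁻}`. -/
def Lpos (L : AddSubgroup (ι → ℤ)) (succ : (ι → ℤ) → (ι → ℤ) → Prop) :
    Set (ι → ℤ) :=
  {u | u ∈ L ∧ succ (vposPart u) (vnegPart u)}

/-- `m` is the `≻`-minimal element of the fiber `F_{L,b}`. -/
def IsMinimalFiber (L : AddSubgroup (ι → ℤ)) (b : ι → ℤ)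
    (succ : (ι → ℤ) → (ι → ℤ) → Prop) (m : ι → ℤ) : Prop :=
  inFiber L b m ∧ ∀ y, inFiber L b y → y ≠ m → succ y m

/-- `G` is a `≻`-Gröbner basis of `L`: from every `x ∈ ℕ^n` there is a
`≻`-decreasing path in `G(F_{L,x},G)` to the `≻`-minimal element of `F_{L,x}`. -/
def IsGroebner (L : AddSubgroup (ι → ℤ)) (succ : (ι → ℤ) → (ι → ℤ) → Prop)
    (G : Set (ι → ℤ)) : Prop :=
  ∀ x, Nonneg x → ∃ m, IsMinimalFiber L x succ m ∧
    ∃ k p, IsPathIn L G x k p ∧ p 0 = x ∧ p k = m ∧ ∀ i < k, succ (p i) (p (i+1))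

/-- there is a `≻`-reduction path from `x` to `y` in `G(F_{L,b},G)`:
no intermediate node is `≻` than both endpoints. -/
def IsRedPath (L : AddSubgroup (ι → ℤ)) (G : Set (ι → ℤ)) (b : ι → ℤ)
    (succ : (ι → ℤ) → (ι → ℤ) → Prop) (x y : ι → ℤ) : Prop :=
  ∃ k p, IsPathIn L G b k p ∧ p 0 = x ∧ p k = y ∧
    ∀ i, 0 < i → i < k → ¬ (succ (p i) x ∧ succ (p i) y)

/-- `(x,z,y)` is a `≻`-critical path in `G(F_{L,b},G)`. -/
def IsCriticalIn (L : AddSubgroup (ι → ℤ)) (G : Set (ι → ℤ)) (b : ι → ℤ)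
    (succ : (ι → ℤ) → (ι → ℤ) → Prop) (x z y : ι → ℤ) : Prop :=
  inFiber L b x ∧ inFiber L b z ∧ inFiber L b y ∧
  adjS G x z ∧ adjS G z y ∧ succ z x ∧ succ z y

/-- `z^(u,v) := max{u⁺, v⁺}` componentwise. -/
def zOf (u v : ι → ℤ) : ι → ℤ := fun i => max (vposPart u i) (vposPart v i)

/-- `x^(u,v) := z^(u,v) − u`. -/
def xOf (u v : ι → ℤ) : ι → ℤ := zOf u v - u

/-- `y^(u,v) := z^(u,v) − v`. -/
def yOf (u v : ι → ℤ) : ι → ℤ := zOf u v - v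

/-- `(x,z,y)` is a `≻`-critical path for the pair `(u,v)`. -/
def IsCriticalFor (succ : (ι → ℤ) → (ι → ℤ) → Prop) (u v x z y : ι → ℤ) : Prop :=
  Nonneg x ∧ Nonneg z ∧ Nonneg y ∧ z - x = u ∧ z - y = v ∧ succ z x ∧ succ z y

/-- rational inner product `φ·x`. -/
def qdot (φ : ι → ℚ) (x : ι → ℤ) : ℚ := ∑ i, φ i * (x i : ℚ)

/-- there is a `φ`-reduction path from `x` to `y` in `G(F_{L,b},G)`. -/
def IsPhiRedPath (L : AddSubgroup (ι → ℤ)) (G : Set (ι → ℤ)) (b : ι → ℤ)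
    (φ : ι → ℚ) (x y : ι → ℤ) : Prop :=
  ∃ k p, IsPathIn L G b k p ∧ p 0 = x ∧ p k = y ∧
    ∀ i, 0 < i → i < k → ¬ (qdot φ x < qdot φ (p i) ∧ qdot φ y < qdot φ (p i))

/-- `G` is a `φ`-Gröbner basis of `L`. -/
def IsPhiGroebner (L : AddSubgroup (ι → ℤ)) (φ : ι → ℚ) (G : Set (ι → ℤ)) : Prop :=
  ∀ b x y, inFiber L b x → inFiber L b y → IsPhiRedPath L G b φ x y

/-- `x ∧_σ y`: componentwise min on `σ`, zero elsewhere. -/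
def meetOn (σ : Set ι) (x y : ι → ℤ) : ι → ℤ :=
  fun i => if i ∈ σ then min (x i) (y i) else 0

/-- `T` is `σ`-saturated on `S`. -/
def IsSaturatedOn (L : AddSubgroup (ι → ℤ)) (σ : Set ι) (S T : Set (ι → ℤ)) : Prop :=
  ∀ b x y, inFiber L b x → inFiber L b y → ConnIn L S b x y →
    ConnIn L T (b - meetOn σ x y) (x - meetOn σ x y) (y - meetOn σ x y)

/-- membership in `F^σ_{L,b}`: nonnegative outside `σ`. -/
def inFiberFree (L : AddSubgroup (ι → ℤ)) (σ : Set ι) (b x : ι → ℤ) : Prop :=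
  (∀ i, i ∉ σ → 0 ≤ x i) ∧ x - b ∈ L

/-- path in the graph `G(F^σ_{L,b}, S)`. -/
def IsPathFree (L : AddSubgroup (ι → ℤ)) (σ : Set ι) (S : Set (ι → ℤ)) (b : ι → ℤ)
    (k : ℕ) (p : ℕ → ι → ℤ) : Prop :=
  (∀ i ≤ k, inFiberFree L σ b (p i)) ∧ ∀ i < k, adjS S (p i) (p (i+1))

/-- connectivity in `G(F^σ_{L,b}, S)`. -/
def ConnFree (L : AddSubgroup (ι → ℤ)) (σ : Set ι) (S : Set (ι → ℤ))
    (b x y : ι → ℤ) : Prop :=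
  ∃ k p, IsPathFree L σ S b k p ∧ p 0 = x ∧ p k = y

/-- `S` is a `σ`-generating set of `L`. -/
def IsGenSetFree (L : AddSubgroup (ι → ℤ)) (σ : Set ι) (S : Set (ι → ℤ)) : Prop :=
  ∀ b x y, inFiberFree L σ b x → inFiberFree L σ b y → ConnFree L σ S b x y

/-- there is a `z`-bounded path from `x` to `y` in `G(F_{L,b},G)`:
all nodes are `≺ z`. -/
def IsBoundedPath (L : AddSubgroup (ι → ℤ)) (G : Set (ι → ℤ)) (b : ι → ℤ)
    (succ : (ι → ℤ) → (ι → ℤ) → Prop) (z x y : ι → ℤ) : Prop :=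
  ∃ k p, IsPathIn L G b k p ∧ p 0 = x ∧ p k = y ∧ ∀ i ≤ k, succ z (p i)

/-- `ē^i = −e^i` as a rational vector. -/
def ebar [DecidableEq ι] (i : ι) : ι → ℚ := fun j => if j = i then -1 else 0

/-- projection deleting the `i`-th coordinate. -/
def projCoord {n : ℕ} (i : Fin (n+1)) : (Fin (n+1) → ℤ) →+ (Fin n → ℤ) where
  toFun x := fun j => x (i.succAbove j)
  map_zero' := rfl
  map_add' _ _ := rfl

/-- projection onto the coordinates outside `σ`. -/
def projSet {n : ℕ} (σ : Finset (Fin n)) :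
    (Fin n → ℤ) →+ ({ i : Fin n // i ∉ σ } → ℤ) where
  toFun x := fun j => x j.1
  map_zero' := rfl
  map_add' _ _ := rfl

end

section Proofs

variable {ι : Type*} [Fintype ι]
variable {L : AddSubgroup (ι → ℤ)} {succ : (ι → ℤ) → (ι → ℤ) → Prop}
set_option linter.unusedSectionVars false

lemma TO.asymm (hto : IsTermOrder L succ) {a b : ι → ℤ} (h : succ a b) : ¬ succ b a :=
  fun h' => hto.irrefl a (hto.trans h h')

lemma succ_of_ne (hto : IsTermOrder L succ) {b x y : ι → ℤ} (hx : inFiber L b x)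
    (hy : inFiber L b y) (hne : x ≠ y) (h : ¬ succ y x) : succ x y :=
  (hto.total b x y hx hy hne).resolve_right h

lemma fiber_congr {b b' x : ι → ℤ} (h : b - b' ∈ L) :
    inFiber L b x ↔ inFiber L b' x := by
  unfold inFiber
  constructor <;> rintro ⟨h1, h2⟩ <;> refine ⟨h1, ?_⟩
  · have h3 := add_mem h2 h
    rwa [show x - b + (b - b') = x - b' by abel] at h3
  · have h3 := sub_mem h2 h
    rwa [show x - b' - (b - b') = x - b by abel] at h3

lemma path_congr {G : Set (ι → ℤ)} {b b' : ι → ℤ} (h : b - b' ∈ L) {k : ℕ}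
    {p : ℕ → ι → ℤ} (hp : IsPathIn L G b k p) : IsPathIn L G b' k p :=
  ⟨fun i hi => (fiber_congr h).mp (hp.1 i hi), hp.2⟩

lemma vpos_sub_vneg (g : ι → ℤ) : vposPart g - vnegPart g = g := by
  funext i
  simp only [Pi.sub_apply, vposPart, vnegPart]
  omega

lemma posStep (hto : IsTermOrder L succ) {g a : ι → ℤ} (hg : g ∈ Lpos L succ)
    (ha : Nonneg a) (hag : Nonneg (a + g)) : succ (a + g) a := by
  have hcn : Nonneg (a - vnegPart g) := by
    intro i
    have h1 := ha i
    have h2 := hag i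
    simp only [Pi.add_apply] at h2
    simp only [Pi.sub_apply, vnegPart]
    omega
  have h1 : vposPart g + (a - vnegPart g) = a + g := by
    funext i
    simp only [Pi.add_apply, Pi.sub_apply, vposPart, vnegPart]
    omega
  have h2 : vnegPart g + (a - vnegPart g) = a := by abel
  have h3 := hto.additive _ _ _ hcn hg.2
  rwa [h1, h2] at h3

lemma lpos_ne_zero (hto : IsTermOrder L succ) {g : ι → ℤ} (hg : g ∈ Lpos L succ) :
    g ≠ 0 := by
  rintro rfl
  have h : vposPart (0 : ι → ℤ) = vnegPart 0 := by
    funext i; simp [vposPart, vnegPart]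
  have h2 := hg.2
  rw [h] at h2
  exact hto.irrefl _ h2

lemma adj_ne (hto : IsTermOrder L succ) {G : Set (ι → ℤ)} (hG : G ⊆ Lpos L succ)
    {a c : ι → ℤ} (h : adjS G a c) : a ≠ c := by
  rintro rfl
  rcases h with h | h <;> rw [sub_self] at h <;> exact lpos_ne_zero hto (hG h) rfl

lemma adj_symm {S : Set (ι → ℤ)} {a c : ι → ℤ} (h : adjS S a c) : adjS S c a :=
  Or.symm h

lemma adj_translate {S : Set (ι → ℤ)} {a c γ : ι → ℤ} (h : adjS S a c) :
    adjS S (a + γ) (c + γ) := by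
  rcases h with h | h
  · left; rwa [show a + γ - (c + γ) = a - c by abel]
  · right; rwa [show c + γ - (a + γ) = c - a by abel]

lemma exists_argmax (hto : IsTermOrder L succ) {b : ι → ℤ} :
    ∀ (k : ℕ) (p : ℕ → ι → ℤ), (∀ i ≤ k, inFiber L b (p i)) →
      ∃ i0 ≤ k, ∀ j ≤ k, ¬ succ (p j) (p i0) := by
  intro k
  induction k with
  | zero =>
    intro p hp
    refine ⟨0, le_rfl, fun j hj => ?_⟩
    have : j = 0 := Nat.le_zero.mp hj
    subst this
    exact hto.irrefl _
  | succ k ih =>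
    intro p hp
    obtain ⟨i0, hi0, hmax⟩ := ih p (fun i hi => hp i (hi.trans (Nat.le_succ k)))
    by_cases h : succ (p (k + 1)) (p i0)
    · refine ⟨k + 1, le_rfl, fun j hj hcon => ?_⟩
      rcases Nat.lt_succ_iff_lt_or_eq.mp (Nat.lt_succ_of_le hj) with hj' | hj'
      · exact hmax j (Nat.lt_succ_iff.mp hj') (hto.trans hcon h)
      · subst hj'; exact hto.irrefl _ hcon
    · refine ⟨i0, hi0.trans (Nat.le_succ k), fun j hj => ?_⟩
      rcases Nat.lt_succ_iff_lt_or_eq.mp (Nat.lt_succ_of_le hj) with hj' | hj'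
      · exact hmax j (Nat.lt_succ_iff.mp hj')
      · subst hj'; exact h

lemma chain_succ (hto : IsTermOrder L succ) {k : ℕ} {p : ℕ → ι → ℤ}
    (hdec : ∀ i < k, succ (p i) (p (i + 1))) :
    ∀ j, 0 < j → j ≤ k → succ (p 0) (p j) := by
  intro j
  induction j with
  | zero => intro h; omega
  | succ j ih =>
    intro _ hj
    by_cases hj0 : j = 0
    · subst hj0; exact hdec 0 (by omega)
    · exact hto.trans (ih (by omega) (by omega)) (hdec j (by omega))

/-- Critical-path replacement: a critical path `(x,z,y)` can be replaced by a
path from `x` to `y` all of whose nodes are `≺ z`. -/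
lemma crit_replace (hto : IsTermOrder L succ) {G : Set (ι → ℤ)} (hG : G ⊆ Lpos L succ)
    (hpairs : ∀ u ∈ G, ∀ v ∈ G, IsRedPath L G (zOf u v) succ (xOf u v) (yOf u v))
    {b x z y : ι → ℤ} (hx : inFiber L b x) (hz : inFiber L b z) (hy : inFiber L b y)
    (haxz : adjS G x z) (hazy : adjS G z y) (hzx : succ z x) (hzy : succ z y) :
    ∃ l q, IsPathIn L G b l q ∧ q 0 = x ∧ q l = y ∧ ∀ j ≤ l, succ z (q j) := by
  have hu : z - x ∈ G := by
    rcases haxz with h | h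
    · exfalso
      have hstep := posStep hto (hG h) hz.1
        (by rw [show z + (x - z) = x by abel]; exact hx.1)
      rw [show z + (x - z) = x by abel] at hstep
      exact TO.asymm hto hstep hzx
    · exact h
  have hv : z - y ∈ G := by
    rcases hazy with h | h
    · exact h
    · exfalso
      have hstep := posStep hto (hG h) hz.1
        (by rw [show z + (y - z) = y by abel]; exact hy.1)
      rw [show z + (y - z) = y by abel] at hstep
      exact TO.asymm hto hstep hzy
  obtain ⟨k, p, hpath, hp0, hpk, hred⟩ := hpairs _ hu _ hv
  set γ : ι → ℤ := z - zOf (z - x) (z - y) with hγdef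
  have hγ : Nonneg γ := by
    intro i
    have h1 := hx.1 i
    have h2 := hy.1 i
    have h3 := hz.1 i
    simp only [hγdef, Pi.sub_apply, zOf, vposPart]
    omega
  have hxeq : xOf (z - x) (z - y) + γ = x := by
    show zOf (z - x) (z - y) - (z - x) + (z - zOf (z - x) (z - y)) = x
    abel
  have hyeq : yOf (z - x) (z - y) + γ = y := by
    show zOf (z - x) (z - y) - (z - y) + (z - zOf (z - x) (z - y)) = y
    abel
  have hxin : inFiber L (zOf (z - x) (z - y)) (xOf (z - x) (z - y)) := by
    rw [← hp0]; exact hpath.1 0 (Nat.zero_le k)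
  have hyin : inFiber L (zOf (z - x) (z - y)) (yOf (z - x) (z - y)) := by
    rw [← hpk]; exact hpath.1 k le_rfl
  refine ⟨k, fun j => p j + γ, ⟨?_, ?_⟩, by show p 0 + γ = x; rw [hp0, hxeq],
    by show p k + γ = y; rw [hpk, hyeq], ?_⟩
  · intro j hj
    show inFiber L b (p j + γ)
    have hf := hpath.1 j hj
    constructor
    · intro i
      have := hf.1 i
      have := hγ i
      simp only [Pi.add_apply]
      omega
    · have h1 := add_mem hf.2 hz.2
      rwa [show p j - zOf (z - x) (z - y) + (z - b) = p j + γ - b by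
        rw [hγdef]; abel] at h1
  · intro j hj
    exact adj_translate (hpath.2 j hj)
  · intro j hj
    show succ z (p j + γ)
    by_cases hj0 : j = 0
    · subst hj0
      rw [hp0, hxeq]; exact hzx
    by_cases hjk : j = k
    · subst hjk
      rw [hpk, hyeq]; exact hzy
    have hnb := hred j (by omega) (by omega)
    have hpj := hpath.1 j hj
    rcases not_and_or.mp hnb with h | h
    · by_cases he : p j = xOf (z - x) (z - y)
      · rw [he, hxeq]; exact hzx
      · have hs := succ_of_ne hto hxin hpj (Ne.symm he) h
        have := hto.additive _ _ γ hγ hs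
        rw [hxeq] at this
        exact hto.trans hzx this
    · by_cases he : p j = yOf (z - x) (z - y)
      · rw [he, hyeq]; exact hzy
      · have hs := succ_of_ne hto hyin hpj (Ne.symm he) h
        have := hto.additive _ _ γ hγ hs
        rw [hyeq] at this
        exact hto.trans hzy this

/-- Main lemma: a path all of whose nodes are `≼ z` can be turned into a
reduction path between its endpoints. -/
lemma bounded_to_red (hto : IsTermOrder L succ) {G : Set (ι → ℤ)} (hG : G ⊆ Lpos L succ)
    (hpairs : ∀ u ∈ G, ∀ v ∈ G, IsRedPath L G (zOf u v) succ (xOf u v) (yOf u v))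
    (b : ι → ℤ) :
    ∀ z, inFiber L b z → ∀ m k (p : ℕ → ι → ℤ), IsPathIn L G b k p →
      (∀ i ≤ k, ¬ succ (p i) z) →
      ((Finset.range (k + 1)).filter (fun i => p i = z)).card ≤ m →
      IsRedPath L G b succ (p 0) (p k) := by
  intro z
  refine (hto.wf b).induction
    (C := fun z => inFiber L b z → ∀ m k (p : ℕ → ι → ℤ), IsPathIn L G b k p →
      (∀ i ≤ k, ¬ succ (p i) z) →
      ((Finset.range (k + 1)).filter (fun i => p i = z)).card ≤ m →
      IsRedPath L G b succ (p 0) (p k)) z ?_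
  clear z
  intro z ihz hzf m
  induction m with
  | zero =>
    intro k p hpath hbd hcard
    have hempty : ∀ i ≤ k, p i ≠ z := by
      intro i hi hcon
      have : i ∈ (Finset.range (k + 1)).filter (fun i => p i = z) := by
        simp [Finset.mem_filter, Finset.mem_range, hcon]
        omega
      have := Finset.card_pos.mpr ⟨i, this⟩
      omega
    obtain ⟨i0, hi0, hmax⟩ := exists_argmax hto k p hpath.1
    have hsz : succ z (p i0) :=
      succ_of_ne hto hzf (hpath.1 i0 hi0) (fun hc => hempty i0 hi0 hc.symm)
        (hbd i0 hi0)
    exact ihz (p i0) ⟨hpath.1 i0 hi0, hzf, hsz⟩ (hpath.1 i0 hi0)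
      (((Finset.range (k + 1)).filter (fun i => p i = p i0)).card) k p hpath hmax le_rfl
  | succ m ihm =>
    intro k p hpath hbd hcard
    by_cases hc : ((Finset.range (k + 1)).filter (fun i => p i = z)).card ≤ m
    · exact ihm k p hpath hbd hc
    · have hcardeq : ((Finset.range (k + 1)).filter (fun i => p i = z)).card = m + 1 := by
        omega
      have hne : ∃ i, i ∈ (Finset.range (k + 1)).filter (fun i => p i = z) := by
        have : 0 < ((Finset.range (k + 1)).filter (fun i => p i = z)).card := by omega
        obtain ⟨i, hi⟩ := Finset.card_pos.mp this
        exact ⟨i, hi⟩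
      obtain ⟨i, hi⟩ := hne
      have hik' : i ≤ k := by
        have := (Finset.mem_filter.mp hi).1
        simp only [Finset.mem_range] at this
        omega
      have hpiz : p i = z := (Finset.mem_filter.mp hi).2
      by_cases hi0 : i = 0
      · subst hi0
        refine ⟨k, p, hpath, rfl, rfl, fun j hj1 hj2 hcon => ?_⟩
        exact hbd j (le_of_lt hj2) (by rw [← hpiz]; exact hcon.1)
      by_cases hik : i = k
      · refine ⟨k, p, hpath, rfl, rfl, fun j hj1 hj2 hcon => ?_⟩
        exact hbd j (le_of_lt hj2) (by rw [← hpiz, hik]; exact hcon.2)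
      -- 0 < i < k : splice out the peak at i
      have hi1 : 1 ≤ i := by omega
      have hik2 : i + 1 ≤ k := by omega
      have hadj1 : adjS G (p (i - 1)) (p i) := by
        have h := hpath.2 (i - 1) (by omega)
        rwa [show i - 1 + 1 = i by omega] at h
      have hadj2 : adjS G (p i) (p (i + 1)) := hpath.2 i (by omega)
      have hn1 : succ z (p (i - 1)) := by
        refine succ_of_ne hto hzf (hpath.1 (i - 1) (by omega)) ?_ (hbd (i - 1) (by omega))
        intro hc'
        exact adj_ne hto hG hadj1 (by rw [hpiz, ← hc'])
      have hn2 : succ z (p (i + 1)) := by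
        refine succ_of_ne hto hzf (hpath.1 (i + 1) (by omega)) ?_ (hbd (i + 1) (by omega))
        intro hc'
        exact adj_ne hto hG hadj2 (by rw [hpiz, ← hc'])
      obtain ⟨l, q, hqpath, hq0, hql, hqb⟩ := crit_replace hto hG hpairs
        (hpath.1 (i - 1) (by omega)) hzf (hpath.1 (i + 1) (by omega))
        (by rw [← hpiz]; exact hadj1) (by rw [← hpiz]; exact hadj2) hn1 hn2
      set k' := k + l - 2 with hk'def
      set r : ℕ → ι → ℤ :=
        fun j => if j < i then p j else if j ≤ i - 1 + l then q (j - i + 1)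
          else p (j - l + 2) with hrdef
      have hrA : ∀ j, j < i → r j = p j := by
        intro j h; simp only [hrdef]; rw [if_pos h]
      have hrB : ∀ j, i ≤ j → j ≤ i - 1 + l → r j = q (j - i + 1) := by
        intro j h1 h2; simp only [hrdef]; rw [if_neg (by omega), if_pos h2]
      have hrC : ∀ j, i - 1 + l < j → r j = p (j - l + 2) := by
        intro j h; simp only [hrdef]; rw [if_neg (by omega), if_neg (by omega)]
      have hnodes : ∀ j ≤ k', inFiber L b (r j) := by
        intro j hj
        by_cases h1 : j < i
        · rw [hrA j h1]; exact hpath.1 j (by omega)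
        by_cases h2 : j ≤ i - 1 + l
        · rw [hrB j (by omega) h2]; exact hqpath.1 (j - i + 1) (by omega)
        · rw [hrC j (by omega)]; exact hpath.1 (j - l + 2) (by omega)
      have hradj : ∀ j, j < k' → adjS G (r j) (r (j + 1)) := by
        intro j hj
        by_cases h1 : j + 1 < i
        · rw [hrA j (by omega), hrA (j + 1) h1]
          exact hpath.2 j (by omega)
        by_cases h2 : j + 1 = i
        · rw [hrA j (by omega)]
          by_cases hl : 1 ≤ l
          · rw [hrB (j + 1) (by omega) (by omega)]
            have h := hqpath.2 0 (by omega)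
            rw [hq0] at h
            rw [show j + 1 - i + 1 = 1 by omega]
            rwa [show j = i - 1 by omega]
          · have hl0 : l = 0 := by omega
            rw [hrC (j + 1) (by omega), show j + 1 - l + 2 = i + 2 by omega]
            have hjoin : p (i - 1) = p (i + 1) := by rw [← hq0, ← hql, hl0]
            rw [show j = i - 1 by omega, hjoin]
            exact hpath.2 (i + 1) (by omega)
        by_cases h3 : j + 1 ≤ i - 1 + l
        · rw [hrB j (by omega) (by omega), hrB (j + 1) (by omega) h3]
          have h := hqpath.2 (j - i + 1) (by omega)
          rwa [show j + 1 - i + 1 = j - i + 1 + 1 by omega]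
        by_cases h4 : j ≤ i - 1 + l
        · -- j = i - 1 + l, with l ≥ 1
          have hl : 1 ≤ l := by omega
          rw [hrB j (by omega) h4, hrC (j + 1) (by omega)]
          rw [show j - i + 1 = l by omega, hql, show j + 1 - l + 2 = i + 2 by omega]
          exact hpath.2 (i + 1) (by omega)
        · rw [hrC j (by omega), hrC (j + 1) (by omega)]
          have h := hpath.2 (j - l + 2) (by omega)
          rwa [show j + 1 - l + 2 = j - l + 2 + 1 by omega]
      have hrbd : ∀ j ≤ k', ¬ succ (r j) z := by
        intro j hj
        by_cases h1 : j < i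
        · rw [hrA j h1]; exact hbd j (by omega)
        by_cases h2 : j ≤ i - 1 + l
        · rw [hrB j (by omega) h2]
          exact TO.asymm hto (hqb (j - i + 1) (by omega))
        · rw [hrC j (by omega)]; exact hbd (j - l + 2) (by omega)
      have hr0 : r 0 = p 0 := hrA 0 (by omega)
      have hrk : r k' = p k := by
        by_cases h1 : k' < i
        · have hl0 : l = 0 := by omega
          have hieq : i = k - 1 := by omega
          rw [hrA k' h1]
          have h2 : p k' = q 0 := by rw [hq0, show k' = i - 1 by omega]
          rw [h2, show (0 : ℕ) = l by omega, hql, show i + 1 = k by omega]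
        by_cases h2 : k' ≤ i - 1 + l
        · rw [hrB k' (by omega) h2]
          rw [show k' - i + 1 = l by omega, hql, show i + 1 = k by omega]
        · rw [hrC k' (by omega)]
          rw [show k' - l + 2 = k by omega]
      -- the new path has at most m peaks equal to z
      have hcard' : ((Finset.range (k' + 1)).filter (fun j => r j = z)).card ≤ m := by
        have hinj : ∀ j ∈ (Finset.range (k' + 1)).filter (fun j => r j = z),
            j < i ∨ i - 1 + l < j := by
          intro j hj
          obtain ⟨hj1, hj2⟩ := Finset.mem_filter.mp hj
          by_cases h1 : j < i
          · exact Or.inl h1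
          by_cases h2 : j ≤ i - 1 + l
          · exfalso
            rw [hrB j (by omega) h2] at hj2
            exact hto.irrefl z (by rw [← hj2] at hqb ⊢; exact hqb (j - i + 1) (by omega))
          · exact Or.inr (by omega)
        have hmaps : ∀ j ∈ (Finset.range (k' + 1)).filter (fun j => r j = z),
            (if j < i then j else j - l + 2) ∈
              ((Finset.range (k + 1)).filter (fun i => p i = z)).erase i := by
          intro j hj
          obtain ⟨hj1, hj2⟩ := Finset.mem_filter.mp hj
          simp only [Finset.mem_range] at hj1
          rcases hinj j hj with h1 | h1
          · rw [if_pos h1]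
            refine Finset.mem_erase.mpr ⟨by omega, Finset.mem_filter.mpr ⟨?_, ?_⟩⟩
            · simp only [Finset.mem_range]; omega
            · rw [← hrA j h1]; exact hj2
          · rw [if_neg (by omega)]
            refine Finset.mem_erase.mpr ⟨by omega, Finset.mem_filter.mpr ⟨?_, ?_⟩⟩
            · simp only [Finset.mem_range]; omega
            · rw [← hrC j h1]; exact hj2
        have hcle := Finset.card_le_card_of_injOn (fun j => if j < i then j else j - l + 2)
          hmaps ?_
        · have herase : (((Finset.range (k + 1)).filter (fun i => p i = z)).erase i).card
              = m := by
            rw [Finset.card_erase_of_mem hi, hcardeq]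
            omega
          omega
        · intro a ha b' hb' hab
          have hab' : (if a < i then a else a - l + 2)
              = (if b' < i then b' else b' - l + 2) := hab
          rcases hinj a ha with h1 | h1 <;> rcases hinj b' hb' with h2 | h2
          · rwa [if_pos h1, if_pos h2] at hab'
          · rw [if_pos h1, if_neg (by omega)] at hab'; omega
          · rw [if_neg (by omega), if_pos h2] at hab'; omega
          · rw [if_neg (by omega), if_neg (by omega)] at hab'; omega
      have hfin := ihm k' r ⟨hnodes, hradj⟩ hrbd hcard'
      rwa [hr0, hrk] at hfin

/-- From a generating set with reduction paths for all critical pairs of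
generators, every pair of elements of a common fiber has a reduction path. -/
lemma gen_to_red (hto : IsTermOrder L succ) {G : Set (ι → ℤ)} (hG : G ⊆ Lpos L succ)
    (hgen : IsGenSet L G)
    (hpairs : ∀ u ∈ G, ∀ v ∈ G, IsRedPath L G (zOf u v) succ (xOf u v) (yOf u v)) :
    ∀ b x y, inFiber L b x → inFiber L b y → IsRedPath L G b succ x y := by
  intro b x y hx hy
  obtain ⟨k, p, hpath, hp0, hpk⟩ := hgen b x y hx hy
  obtain ⟨i0, hi0, hmax⟩ := exists_argmax hto k p hpath.1
  have h := bounded_to_red hto hG hpairs b (p i0) (hpath.1 i0 hi0)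
    (((Finset.range (k + 1)).filter (fun i => p i = p i0)).card) k p hpath hmax le_rfl
  rwa [hp0, hpk] at h

lemma first_step (hto : IsTermOrder L succ) {G : Set (ι → ℤ)} {b m : ι → ℤ}
    (hmin : ∀ y, inFiber L b y → y ≠ m → succ y m) :
    ∀ k (p : ℕ → ι → ℤ), IsPathIn L G b k p → p k = m → p 0 ≠ m →
      (∀ i, 0 < i → i < k → ¬(succ (p i) (p 0) ∧ succ (p i) m)) →
      ∃ x'', inFiber L b x'' ∧ adjS G (p 0) x'' ∧ succ (p 0) x'' := by
  intro k
  induction k using Nat.strong_induction_on with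
  | _ k ih =>
  intro p hpath hpk hp0 hred
  match k, ih, hpath, hpk, hred with
  | 0, ih, hpath, hpk, hred => exact absurd hpk hp0
  | 1, ih, hpath, hpk, hred =>
    refine ⟨m, hpk ▸ hpath.1 1 le_rfl, hpk ▸ hpath.2 0 one_pos, ?_⟩
    exact hmin (p 0) (hpath.1 0 (by omega)) hp0
  | (k + 2), ih, hpath, hpk, hred =>
    by_cases h1m : p 1 = m
    · refine ⟨m, h1m ▸ hpath.1 1 (by omega), h1m ▸ hpath.2 0 (by omega), ?_⟩
      exact hmin (p 0) (hpath.1 0 (by omega)) hp0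
    · have hs1m : succ (p 1) m := hmin _ (hpath.1 1 (by omega)) h1m
      have hn : ¬ succ (p 1) (p 0) := fun hc => hred 1 one_pos (by omega) ⟨hc, hs1m⟩
      by_cases h10 : p 1 = p 0
      · have hres := ih (k + 1) (by omega) (fun j => p (j + 1))
          ⟨fun i hi => hpath.1 (i + 1) (by omega), fun i hi => hpath.2 (i + 1) (by omega)⟩
          hpk (by show p 1 ≠ m; rw [h10]; exact hp0) ?_
        · obtain ⟨x'', h1, h2, h3⟩ := hres
          have h2' : adjS G (p 1) x'' := h2
          have h3' : succ (p 1) x'' := h3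
          exact ⟨x'', h1, by rwa [h10] at h2', by rwa [h10] at h3'⟩
        · intro i hi1 hi2
          show ¬(succ (p (i + 1)) (p 1) ∧ succ (p (i + 1)) m)
          rw [h10]
          exact hred (i + 1) (by omega) (by omega)
      · have hs : succ (p 0) (p 1) :=
          succ_of_ne hto (hpath.1 0 (by omega)) (hpath.1 1 (by omega)) (Ne.symm h10) hn
        exact ⟨p 1, hpath.1 1 (by omega), hpath.2 0 (by omega), hs⟩

lemma desc_path (hto : IsTermOrder L succ) {G : Set (ι → ℤ)} {b m : ι → ℤ}
    (hallred : ∀ x y, inFiber L b x → inFiber L b y → IsRedPath L G b succ x y)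
    (hmf : inFiber L b m) (hmin : ∀ y, inFiber L b y → y ≠ m → succ y m) :
    ∀ x', inFiber L b x' → ∃ k p, IsPathIn L G b k p ∧ p 0 = x' ∧ p k = m ∧
      ∀ i < k, succ (p i) (p (i + 1)) := by
  intro x'
  refine (hto.wf b).induction
    (C := fun x' => inFiber L b x' → ∃ k p, IsPathIn L G b k p ∧ p 0 = x' ∧ p k = m ∧
      ∀ i < k, succ (p i) (p (i + 1))) x' ?_
  clear x'
  intro x' ih hx'
  by_cases hxm : x' = m
  · exact ⟨0, fun _ => m, ⟨fun i _ => hmf, fun i hi => absurd hi (by omega)⟩,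
      by rw [hxm], rfl, fun i hi => absurd hi (by omega)⟩
  · obtain ⟨k, p, hpath, hp0, hpk, hred⟩ := hallred x' m hx' hmf
    subst hp0
    obtain ⟨x'', hx''f, hadj, hsucc⟩ := first_step hto hmin k p hpath hpk hxm hred
    obtain ⟨k2, q, hq, hq0, hqk, hqdec⟩ := ih x'' ⟨hx''f, hx', hsucc⟩ hx''f
    refine ⟨k2 + 1, fun j => match j with | 0 => p 0 | (j + 1) => q j,
      ⟨?_, ?_⟩, rfl, hqk, ?_⟩
    · intro i hi
      match i with
      | 0 => exact hx'
      | (i + 1) => exact hq.1 i (by omega)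
    · intro i hi
      match i with
      | 0 => show adjS G (p 0) (q 0); rw [hq0]; exact hadj
      | (i + 1) => exact hq.2 i (by omega)
    · intro i hi
      match i with
      | 0 => show succ (p 0) (q 0); rw [hq0]; exact hsucc
      | (i + 1) => exact hqdec i (by omega)

/-- Concatenation of a path with the reverse of another path having the same
endpoint. -/
lemma concat_paths {G : Set (ι → ℤ)} {b : ι → ℤ} {k1 k2 : ℕ} {p q : ℕ → ι → ℤ}
    (hp : IsPathIn L G b k1 p) (hq : IsPathIn L G b k2 q) (hjoin : p k1 = q k2) :
    ∃ r, IsPathIn L G b (k1 + k2) r ∧ r 0 = p 0 ∧ r (k1 + k2) = q 0 ∧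
      (∀ j ≤ k1, r j = p j) ∧ (∀ j, k1 ≤ j → j ≤ k1 + k2 → r j = q (k1 + k2 - j)) := by
  set r : ℕ → ι → ℤ := fun j => if j ≤ k1 then p j else q (k1 + k2 - j) with hrdef
  have hrA : ∀ j ≤ k1, r j = p j := by
    intro j h; simp only [hrdef]; rw [if_pos h]
  have hrB : ∀ j, k1 ≤ j → j ≤ k1 + k2 → r j = q (k1 + k2 - j) := by
    intro j h1 h2
    by_cases h : j ≤ k1
    · have hjeq : j = k1 := by omega
      simp only [hrdef]
      rw [if_pos h, show k1 + k2 - j = k2 by omega, ← hjoin, hjeq]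
    · simp only [hrdef]; rw [if_neg h]
  refine ⟨r, ⟨?_, ?_⟩, hrA 0 (by omega), ?_, hrA, hrB⟩
  · intro i hi
    by_cases h : i ≤ k1
    · rw [hrA i h]; exact hp.1 i h
    · rw [hrB i (by omega) hi]; exact hq.1 (k1 + k2 - i) (by omega)
  · intro i hi
    by_cases h : i + 1 ≤ k1
    · rw [hrA i (by omega), hrA (i + 1) h]; exact hp.2 i (by omega)
    · rw [hrB i (by omega) (by omega), hrB (i + 1) (by omega) (by omega)]
      have hadj := hq.2 (k1 + k2 - (i + 1)) (by omega)
      rw [show k1 + k2 - (i + 1) + 1 = k1 + k2 - i by omega] at hadj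
      exact adj_symm hadj
  · rw [hrB (k1 + k2) (Nat.le_add_right _ _) le_rfl, show k1 + k2 - (k1 + k2) = 0 by omega]

lemma min_unique (hto : IsTermOrder L succ) {b m m' : ι → ℤ}
    (hm : inFiber L b m) (hm' : inFiber L b m')
    (hmin : ∀ y, inFiber L b y → y ≠ m → succ y m)
    (hmin' : ∀ y, inFiber L b y → y ≠ m' → succ y m') : m = m' := by
  by_contra hne
  exact TO.asymm hto (hmin m' hm' (Ne.symm hne)) (hmin' m hm hne)

lemma xOf_nonneg (u v : ι → ℤ) : Nonneg (xOf u v) := by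
  intro i
  simp only [xOf, zOf, vposPart, Pi.sub_apply]
  omega

lemma yOf_nonneg (u v : ι → ℤ) : Nonneg (yOf u v) := by
  intro i
  simp only [yOf, zOf, vposPart, Pi.sub_apply]
  omega

end Proofs

/-- `G ⊆ L_≻` is a `≻`-Gröbner basis of `L` iff `G` is a
generating set of `L` and for each pair `u,v ∈ G` there exists a `≻`-reduction
path between `x^(u,v)` and `y^(u,v)` in `G(F_{L,z^(u,v)},G)`. -/
theorem stmt5 {n : ℕ} (L : AddSubgroup (Fin n → ℤ))
    (hL : ∀ u ∈ L, Nonneg u → u = 0)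
    (succ : (Fin n → ℤ) → (Fin n → ℤ) → Prop) (hto : IsTermOrder L succ)
    (G : Set (Fin n → ℤ)) (hG : G ⊆ Lpos L succ) :
    IsGroebner L succ G ↔
      (IsGenSet L G ∧ ∀ u ∈ G, ∀ v ∈ G,
        IsRedPath L G (zOf u v) succ (xOf u v) (yOf u v)) := by
  constructor
  · intro hgb
    constructor
    · -- `G` is a generating set
      intro b x y hx hy
      obtain ⟨mx, hmx, k1, p, hp, hp0, hpk, -⟩ := hgb x hx.1
      obtain ⟨my, hmy, k2, q, hq, hq0, hqk, -⟩ := hgb y hy.1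
      have hpb : IsPathIn L G b k1 p := path_congr hx.2 hp
      have hqb' : IsPathIn L G b k2 q := path_congr hy.2 hq
      have hmxb : inFiber L b mx := (fiber_congr hx.2).mp hmx.1
      have hmyb : inFiber L b my := (fiber_congr hy.2).mp hmy.1
      have hminx : ∀ w, inFiber L b w → w ≠ mx → succ w mx := fun w hw hne =>
        hmx.2 w ((fiber_congr hx.2).mpr hw) hne
      have hminy : ∀ w, inFiber L b w → w ≠ my → succ w my := fun w hw hne =>
        hmy.2 w ((fiber_congr hy.2).mpr hw) hne
      have hmm : mx = my := min_unique hto hmxb hmyb hminx hminy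
      obtain ⟨r, hr, hr0, hrend, -, -⟩ := concat_paths hpb hqb' (by rw [hpk, hqk, hmm])
      exact ⟨k1 + k2, r, hr, by rw [hr0, hp0], by rw [hrend, hq0]⟩
    · -- reduction paths for critical pairs of generators
      intro u hu v hv
      have huL : u ∈ L := (hG hu).1
      have hvL : v ∈ L := (hG hv).1
      have hxfib : xOf u v - zOf u v ∈ L := by
        rw [show xOf u v - zOf u v = -u by
          show zOf u v - u - zOf u v = -u; abel]
        exact neg_mem huL
      have hyfib : yOf u v - zOf u v ∈ L := by
        rw [show yOf u v - zOf u v = -v by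
          show zOf u v - v - zOf u v = -v; abel]
        exact neg_mem hvL
      obtain ⟨mx, hmx, k1, p, hp, hp0, hpk, hpd⟩ := hgb (xOf u v) (xOf_nonneg u v)
      obtain ⟨my, hmy, k2, q, hq, hq0, hqk, hqd⟩ := hgb (yOf u v) (yOf_nonneg u v)
      have hpb : IsPathIn L G (zOf u v) k1 p := path_congr hxfib hp
      have hqb : IsPathIn L G (zOf u v) k2 q := path_congr hyfib hq
      have hmxb : inFiber L (zOf u v) mx := (fiber_congr hxfib).mp hmx.1
      have hmyb : inFiber L (zOf u v) my := (fiber_congr hyfib).mp hmy.1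
      have hminx : ∀ w, inFiber L (zOf u v) w → w ≠ mx → succ w mx := fun w hw hne =>
        hmx.2 w ((fiber_congr hxfib).mpr hw) hne
      have hminy : ∀ w, inFiber L (zOf u v) w → w ≠ my → succ w my := fun w hw hne =>
        hmy.2 w ((fiber_congr hyfib).mpr hw) hne
      have hmm : mx = my := min_unique hto hmxb hmyb hminx hminy
      obtain ⟨r, hr, hr0, hrend, hrA, hrB⟩ := concat_paths hpb hqb (by rw [hpk, hqk, hmm])
      refine ⟨k1 + k2, r, hr, by rw [hr0, hp0], by rw [hrend, hq0], ?_⟩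
      intro i hi1 hi2 hcon
      by_cases h : i ≤ k1
      · have hch := chain_succ hto hpd i hi1 h
        rw [hp0, ← hrA i h] at hch
        exact TO.asymm hto hch hcon.1
      · have hch := chain_succ hto hqd (k1 + k2 - i) (by omega) (by omega)
        rw [hq0, ← hrB i (by omega) (by omega)] at hch
        exact TO.asymm hto hch hcon.2
  · rintro ⟨hgen, hpairs⟩
    intro x hx
    have hxf : inFiber L x x := ⟨hx, by rw [sub_self]; exact zero_mem L⟩
    have hne : Set.Nonempty {y | inFiber L x y} := ⟨x, hxf⟩
    set m := WellFounded.min (hto.wf x) {y | inFiber L x y} hne with hmdef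
    have hmf : inFiber L x m := WellFounded.min_mem (hto.wf x) {y | inFiber L x y} hne
    have hmin : ∀ y, inFiber L x y → y ≠ m → succ y m := by
      intro y hy hne'
      have hnot := WellFounded.not_lt_min (hto.wf x) {y | inFiber L x y} hy
      exact (hto.total x y m hy hmf hne').resolve_right (fun hc => hnot ⟨hy, hmf, hc⟩)
    exact ⟨m, ⟨hmf, hmin⟩,
      desc_path hto (fun a c ha hc => gen_to_red hto hG hgen hpairs x a c ha hc)
        hmf hmin x hxf⟩
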